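/- Let G be a finite group, k an algebraically closed field of characteristic r, H ≤ G with O_{r'}(H) = O^r(H), and V an irreducible kG-module that is not a composition factor of the permutation module Ind_H^G k. Then H^1(G, V) = 0. -/

import Mathlib

/-- `OrEqOr r H` says that the largest normal subgroup of `H` of order not divisible
by `r` coincides with the smallest normal subgroup of `H` with `r`-group quotient
(i.e. `O_{r'}(H) = O^r(H)`), where for finite `H` the quotient `H ⧸ N` being an
`r`-group is expressed by the index of `N` being a power of `r`. -/
def OrEqOr (r : ℕ) (H : Type) [Group H] : Prop :=
  ∃ A : Subgroup H, A.Normal ∧ (¬ r ∣ Nat.card A) ∧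
    (∀ N : Subgroup H, N.Normal → ¬ r ∣ Nat.card N → N ≤ A) ∧
    (∃ m : ℕ, A.index = r ^ m) ∧
    (∀ N : Subgroup H, N.Normal → (∃ m : ℕ, N.index = r ^ m) → A ≤ N)

/-- The quotient representation on `V ⧸ W` for a `G`-invariant subspace `W`. -/
noncomputable def Representation.quot {k G V : Type} [Field k] [Group G] [AddCommGroup V]
    [Module k V] (ρ : Representation k G V) (W : Submodule k V)
    (hW : ∀ g : G, W ≤ W.comap (ρ g)) : Representation k G (V ⧸ W) where
  toFun g := W.mapQ W (ρ g) (hW g)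
  map_one' := by
    apply Submodule.linearMap_qext; ext v; simp [Submodule.mapQ_apply]
  map_mul' g h := by
    apply Submodule.linearMap_qext; ext v; simp [Submodule.mapQ_apply]

/-- The permutation module `P = Ind_H^G k` on the cosets of `H`, as a representation. -/
noncomputable def permRep (k G : Type) [Field k] [Group G] (H : Subgroup G) : Rep k G :=
  Rep.ofMulAction k G (G ⧸ H)

/-- The quotient `P / P^G` of the permutation module on cosets of `H` by its
`G`-fixed submodule. -/
noncomputable def permQuot (k G : Type) [Field k] [Group G] (H : Subgroup G) : Rep k G :=
  Rep.of ((Representation.ofMulAction k G (G ⧸ H)).quot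
    (Representation.invariants (Representation.ofMulAction k G (G ⧸ H)))
    (fun g v hv => by
      rw [Submodule.mem_comap,
        (Representation.mem_invariants (Representation.ofMulAction k G (G ⧸ H)) v).mp hv g]
      exact hv))

open CategoryTheory groupCohomology

namespace StmtFour

/-- If a `p`-group-by-`p'`-group `H` has a nonzero vector fixed by the normal `p'`-part,
then it has a nonzero fixed vector, over a field of characteristic `p`. -/
lemma aux_fixed_point {r : ℕ} [Fact r.Prime] {k : Type} [Field k] [CharP k r]
    {M : Type} [AddCommGroup M] [Module k M]
    {H : Type} [Group H] [Finite H] (ρ : H →* (M →ₗ[k] M))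
    (A : Subgroup H) (hAn : A.Normal) (hAindex : ∃ m : ℕ, A.index = r ^ m)
    {x : M} (hx : x ≠ 0) (hxA : ∀ a ∈ A, ρ a x = x) :
    ∃ y : M, y ≠ 0 ∧ ∀ h : H, ρ h y = y := by
  haveI : NeZero r := ⟨(Fact.out : r.Prime).pos.ne'⟩
  have hsmul : ∀ m : M, r • m = 0 := fun m => by
    have h1 : ((r : ℕ) : k) • m = 0 := by rw [CharP.cast_eq_zero k r, zero_smul]
    rwa [Nat.cast_smul_eq_nsmul] at h1
  letI : Module (ZMod r) M := AddCommGroup.zmodModule (n := r) hsmul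
  set orb : Set M := Set.range (fun h : H => ρ h x) with horb
  set W : Submodule (ZMod r) M := Submodule.span (ZMod r) orb with hWdef
  haveI : Module.Finite (ZMod r) ↥W :=
    Module.Finite.span_of_finite _ (Set.finite_range (fun h : H => ρ h x))
  haveI : Finite ↥W := Module.finite_of_finite (ZMod r)
  have hxW : x ∈ W := Submodule.subset_span ⟨1, by simp⟩
  have hstab : ∀ (h : H) (w : M), w ∈ W → ρ h w ∈ W := by
    intro h w hw
    induction hw using Submodule.span_induction with
    | mem y hy =>
      obtain ⟨h', rfl⟩ := hy
      refine Submodule.subset_span ⟨h * h', ?_⟩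
      simp [map_mul]
    | zero => rw [map_zero]; exact W.zero_mem
    | add y z _ _ hy hz => rw [map_add]; exact W.add_mem hy hz
    | smul c y _ hy => rw [ZMod.map_smul (ρ h) c y]; exact W.smul_mem c hy
  have hWA : ∀ (w : M), w ∈ W → ∀ a ∈ A, ρ a w = w := by
    intro w hw
    induction hw using Submodule.span_induction with
    | mem y hy =>
      intro a ha
      obtain ⟨h', rfl⟩ := hy
      have h1 : h'⁻¹ * a * h' ∈ A := by simpa using hAn.conj_mem a ha h'⁻¹
      have h2 : a * h' = h' * (h'⁻¹ * a * h') := by group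
      rw [← Module.End.mul_apply, ← map_mul, h2, map_mul, Module.End.mul_apply, hxA _ h1]
    | zero => intro a _; rw [map_zero]
    | add y z _ _ hy hz => intro a ha; rw [map_add, hy a ha, hz a ha]
    | smul c y _ hy => intro a ha; rw [ZMod.map_smul (ρ a) c y, hy a ha]
  letI : MulAction (H ⧸ A) W :=
  { smul := fun γ w => Quotient.liftOn' γ (fun h => (⟨ρ h w, hstab h w w.2⟩ : W))
      (fun h₁ h₂ h12 => by
        have hmem : h₁⁻¹ * h₂ ∈ A := QuotientGroup.leftRel_apply.mp h12
        apply Subtype.ext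
        show ρ h₁ (w : M) = ρ h₂ (w : M)
        have h2 : (h₂ : H) = h₁ * (h₁⁻¹ * h₂) := by group
        rw [h2, map_mul, Module.End.mul_apply, hWA w w.2 _ hmem])
    one_smul := fun w => Subtype.ext (by show ρ 1 (w : M) = w; rw [map_one]; rfl)
    mul_smul := fun γ₁ γ₂ w => by
      induction γ₁ using Quotient.inductionOn' with | h h₁ =>
      induction γ₂ using Quotient.inductionOn' with | h h₂ =>
      apply Subtype.ext
      show ρ (h₁ * h₂) (w : M) = ρ h₁ (ρ h₂ (w : M))
      rw [map_mul]; rfl }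
  obtain ⟨m, hm⟩ := hAindex
  haveI : Finite (H ⧸ A) := Quotient.finite _
  have hΓ : IsPGroup r (H ⧸ A) := IsPGroup.of_card (by rw [← hm]; rfl)
  have hmod := hΓ.card_modEq_card_fixedPoints (α := W)
  have hdvdW : r ∣ Nat.card W := by
    haveI : Fintype W := Fintype.ofFinite _
    haveI h1 : Nontrivial W :=
      ⟨⟨⟨x, hxW⟩, 0, fun h => hx (by simpa using congrArg Subtype.val h)⟩⟩
    have h2 : (Fintype.card W) = r ^ Module.finrank (ZMod r) W := by
      have h3 := Module.card_eq_pow_finrank (K := ZMod r) (V := W)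
      rwa [ZMod.card] at h3
    rw [Nat.card_eq_fintype_card, h2]
    exact dvd_pow_self r (Module.finrank_pos (R := ZMod r) (M := W)).ne'
  have hfix : r ∣ Nat.card (MulAction.fixedPoints (H ⧸ A) W) :=
    (Nat.modEq_zero_iff_dvd).mp (hmod.symm.trans (Nat.modEq_zero_iff_dvd.mpr hdvdW))
  have hmem0 : (0 : W) ∈ MulAction.fixedPoints (H ⧸ A) W := by
    intro γ
    induction γ using Quotient.inductionOn' with | h h =>
    exact Subtype.ext (by show ρ h ((0:W):M) = ((0:W):M); simp)
  haveI : Finite (MulAction.fixedPoints (H ⧸ A) W) := Subtype.finite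
  haveI : Nonempty (MulAction.fixedPoints (H ⧸ A) W) := ⟨⟨0, hmem0⟩⟩
  have hpos : 0 < Nat.card (MulAction.fixedPoints (H ⧸ A) W) := Nat.card_pos
  have h1lt : 1 < Nat.card (MulAction.fixedPoints (H ⧸ A) W) :=
    lt_of_lt_of_le (Fact.out : r.Prime).one_lt (Nat.le_of_dvd hpos hfix)
  haveI := (Finite.one_lt_card_iff_nontrivial).mp h1lt
  obtain ⟨y, hy⟩ := exists_ne (⟨(0:W), hmem0⟩ : MulAction.fixedPoints (H ⧸ A) W)
  refine ⟨((y : W) : M), ?_, ?_⟩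
  · intro h0
    exact hy (Subtype.ext (Subtype.ext h0))
  · intro h
    exact congrArg Subtype.val (y.2 (QuotientGroup.mk h))

variable {k G : Type} [Field k] [Group G]

/-- Subrepresentation on a stable submodule. -/
def subRep {M : Type} [AddCommGroup M] [Module k M] (ρ : Representation k G M)
    (N : Submodule k M) (hN : ∀ (g : G) (x : M), x ∈ N → ρ g x ∈ N) :
    Representation k G N where
  toFun g := (ρ g).restrict (fun x hx => hN g x hx)
  map_one' := by
    ext x
    simp [LinearMap.restrict_apply]
  map_mul' g h := by
    ext x
    simp [LinearMap.restrict_apply]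

@[simp] lemma subRep_apply {M : Type} [AddCommGroup M] [Module k M] (ρ : Representation k G M)
    (N : Submodule k M) (hN : ∀ (g : G) (x : M), x ∈ N → ρ g x ∈ N) (g : G) (x : N) :
    (subRep ρ N hN g x : M) = ρ g (x : M) := rfl

variable {H : Subgroup G} (E : Rep k G) (e : E) (he : ∀ g ∈ H, E.ρ g e = e)

/-- The underlying linear map of `ofFixedHom`. -/
noncomputable def ofFixedMap : MonoidAlgebra k (G ⧸ H) →ₗ[k] E :=
  (Finsupp.lift E k (G ⧸ H) fun q =>
    Quotient.liftOn' q (fun g => E.ρ g e) fun g g' hgg' => by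
      have h1 : g⁻¹ * g' ∈ H := QuotientGroup.leftRel_apply.mp hgg'
      have h2 : g' = g * (g⁻¹ * g') := by group
      show E.ρ g e = E.ρ g' e
      rw [h2, map_mul, Module.End.mul_apply, he _ h1]) ∘ₗ
    (MonoidAlgebra.coeffLinearEquiv k).toLinearMap

lemma ofFixedMap_single (g : G) (c : k) :
    ofFixedMap E e he (MonoidAlgebra.single (QuotientGroup.mk g) c) = c • E.ρ g e := by
  show (Finsupp.lift (↑E.V) k (G ⧸ H) _) (Finsupp.single _ c) = c • E.ρ g e
  erw [Finsupp.lift_apply]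
  rw [Finsupp.sum_single_index (by rw [zero_smul])]
  rfl

lemma ofFixedMap_comm (g : G) :
    (ofFixedMap E e he).comp (Representation.ofMulAction k G (G ⧸ H) g) =
      (E.ρ g).comp (ofFixedMap E e he) := by
  refine MonoidAlgebra.lhom_ext' fun q => LinearMap.ext fun c => ?_
  rw [LinearMap.comp_apply, LinearMap.comp_apply, MonoidAlgebra.lsingle_apply]
  induction q using Quotient.inductionOn' with
  | h x =>
    rw [LinearMap.comp_apply, LinearMap.comp_apply, Representation.ofMulAction_single]
    show ofFixedMap E e he (MonoidAlgebra.single (QuotientGroup.mk (g * x)) c) =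
      E.ρ g (ofFixedMap E e he (MonoidAlgebra.single (QuotientGroup.mk x) c))
    rw [ofFixedMap_single, ofFixedMap_single, map_mul, Module.End.mul_apply, map_smul]

/-- Morphism from the permutation module determined by an `H`-fixed vector. -/
noncomputable def ofFixedHom : permRep k G H ⟶ E :=
  ConcreteCategory.ofHom (C := Rep k G) ⟨ofFixedMap E e he, fun g => ofFixedMap_comm E e he g⟩

lemma ofFixedHom_single (g : G) :
    (ofFixedHom E e he).hom (MonoidAlgebra.single (QuotientGroup.mk g) (1 : k)) = E.ρ g e := by
  have h := ofFixedMap_single E e he g 1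
  rw [one_smul] at h
  exact h

/-- The extension `V ⊕ k` twisted by a 1-cocycle. -/
noncomputable def extRep (V : Rep k G) (f : cocycles₁ V) : Representation k G (V × k) where
  toFun g := LinearMap.prod
    ((V.ρ g).comp (LinearMap.fst k V k) + (LinearMap.snd k V k).smulRight (f g))
    (LinearMap.snd k V k)
  map_one' := by
    refine LinearMap.ext fun p => ?_
    simp [cocycles₁_map_one]
  map_mul' g h := by
    refine LinearMap.ext fun p => ?_
    have hc := (mem_cocycles₁_iff (f : G → V)).1 f.2 g h
    refine Prod.ext ?_ rfl
    show V.ρ (g * h) p.1 + p.2 • (f (g * h)) =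
      V.ρ g (V.ρ h p.1 + p.2 • f h) + p.2 • f g
    rw [hc, map_mul, Module.End.mul_apply, map_add, map_smul, smul_add, add_assoc]

@[simp] lemma extRep_apply (V : Rep k G) (f : cocycles₁ V) (g : G) (p : V × k) :
    extRep V f g p = (V.ρ g p.1 + p.2 • f g, p.2) := rfl

end StmtFour

/-- Let `G` be a finite group, `k` an algebraically closed field of
characteristic `r`, `H ≤ G` with `O_{r'}(H) = O^r(H)`, and `V` an irreducible `kG`-module
that is not a composition factor of `Ind_H^G k` (equivalently, for simple `V`: not a
quotient of any subobject of the permutation module). Then `H^1(G, V) = 0`. -/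
theorem stmt4 {r : ℕ} [Fact r.Prime] {k G : Type} [Field k] [IsAlgClosed k] [CharP k r]
    [Group G] [Finite G] (H : Subgroup G) (hH : OrEqOr r H)
    (V : Rep k G) [Simple V] [FiniteDimensional k V]
    (hnotCF : ¬ ∃ (S : Rep k G) (i : S ⟶ permRep k G H) (π : S ⟶ V), Mono i ∧ Epi π) :
    Limits.IsZero (groupCohomology V 1) := by
  classical
  obtain ⟨A, hAn, hAcard, -, ⟨m, hAindex⟩, -⟩ := hH
  -- no nonzero `H`-fixed vectors in `V`
  have hVH : ∀ y : V, (∀ g ∈ H, V.ρ g y = y) → y = 0 := by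
    intro y hy
    by_contra hy0
    refine hnotCF ⟨permRep k G H, 𝟙 _, StmtFour.ofFixedHom V y hy, inferInstance, ?_⟩
    refine epi_of_nonzero_to_simple (fun h0 => hy0 ?_)
    have h1 := StmtFour.ofFixedHom_single V y hy 1
    rw [h0, map_one] at h1
    exact h1.symm
  -- no nonzero `A`-fixed vectors in `V`
  have hVA : ∀ y : V, (∀ a : ↥H, a ∈ A → V.ρ (a : G) y = y) → y = 0 := by
    intro y hy
    by_contra hy0
    obtain ⟨z, hz0, hz⟩ := StmtFour.aux_fixed_point (V.ρ.comp H.subtype) A hAn ⟨m, hAindex⟩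
      hy0 (fun a ha => hy a ha)
    exact hz0 (hVH z (fun g hg => hz ⟨g, hg⟩))
  have key : ∀ f : cocycles₁ V, (f : G → V) ∈ coboundaries₁ V := by
    intro f
    by_contra hf
    haveI : Fintype ↥A := Fintype.ofFinite _
    have fc : ∀ g g' : G, (f : G → V) (g * g') = V.ρ g ((f : G → V) g') + (f : G → V) g :=
      (mem_cocycles₁_iff (f : G → V)).1 f.2
    set c : k := (Nat.card ↥A : k) with hcdef
    have hc : c ≠ 0 := fun h => hAcard ((CharP.cast_eq_zero_iff k r _).1 h)
    set Sf : V := ∑ a : ↥A, (f : G → V) ((a : ↥H) : G) with hSf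
    set vA : V := c⁻¹ • Sf with hvA
    have C1 : ∀ a : ↥H, a ∈ A → V.ρ (a : G) vA = vA - (f : G → V) (a : G) := by
      intro a ha
      have h1 : V.ρ (a : G) Sf = Sf - c • (f : G → V) (a : G) := by
        rw [hSf, map_sum]
        have h2 : ∀ b : ↥A, V.ρ (a : G) ((f : G → V) ((b : ↥H) : G)) =
            (f : G → V) ((a : G) * ((b : ↥H) : G)) - (f : G → V) (a : G) := fun b => by
          rw [fc (a : G) _]; abel
        rw [Finset.sum_congr rfl (fun b _ => h2 b), Finset.sum_sub_distrib,
          Finset.sum_const, Finset.card_univ]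
        have h3 : ∑ b : ↥A, (f : G → V) ((a : G) * ((b : ↥H) : G)) = Sf := by
          rw [hSf]
          refine Fintype.sum_equiv (Equiv.mulLeft (⟨a, ha⟩ : ↥A)) _ _ (fun b => ?_)
          congr 1
        rw [h3, hcdef, Nat.card_eq_fintype_card, ← Nat.cast_smul_eq_nsmul k]
      rw [hvA, map_smul, h1, smul_sub, smul_smul, inv_mul_cancel₀ hc, one_smul]
    have C2 : ∀ h : ↥H, V.ρ (h : G) vA = vA - (f : G → V) (h : G) := by
      intro h
      have key2 : ∀ a : ↥H, a ∈ A →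
          V.ρ (a : G) (V.ρ (h : G) vA + (f : G → V) (h : G) - vA) =
            V.ρ (h : G) vA + (f : G → V) (h : G) - vA := by
        intro a ha
        have ha' : h⁻¹ * a * h ∈ A := by simpa using hAn.conj_mem a ha h⁻¹
        have hcomm : (a : G) * (h : G) = (h : G) * ((h⁻¹ * a * h : ↥H) : G) := by
          push_cast
          group
        have e1 : V.ρ (a : G) (V.ρ (h : G) vA) =
            V.ρ (h : G) vA - V.ρ (h : G) ((f : G → V) ((h⁻¹ * a * h : ↥H) : G)) := by
          rw [← Module.End.mul_apply, ← map_mul, hcomm, map_mul, Module.End.mul_apply,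
            C1 _ ha', map_sub]
        have e2 : V.ρ (h : G) ((f : G → V) ((h⁻¹ * a * h : ↥H) : G)) =
            V.ρ (a : G) ((f : G → V) (h : G)) + (f : G → V) (a : G) -
              (f : G → V) (h : G) := by
          have q1 := fc (h : G) ((h⁻¹ * a * h : ↥H) : G)
          rw [← hcomm, fc (a : G) (h : G)] at q1
          -- q1 : ρ a (f h) + f a = ρ h (f a') + f h
          have q2 := eq_sub_of_add_eq q1.symm
          rw [q2]
        rw [map_sub, map_add, e1, e2, C1 a ha]
        abel
      have h0 := hVA _ (fun a ha => key2 a ha)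
      exact eq_sub_of_add_eq (sub_eq_zero.mp h0)
    -- the twisted extension and the fixed vector
    set E : Rep k G := Rep.of (StmtFour.extRep V f) with hE
    set ee : (V × k) := (vA, (1 : k)) with hee
    have he : ∀ g ∈ H, E.ρ g ee = ee := by
      intro g hg
      show StmtFour.extRep V f g ee = ee
      rw [StmtFour.extRep_apply]
      have := C2 ⟨g, hg⟩
      refine Prod.ext ?_ rfl
      show V.ρ g vA + (1 : k) • (f : G → V) g = vA
      rw [one_smul, this]
      abel
    set φ : permRep k G H ⟶ E := StmtFour.ofFixedHom E ee he with hφ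
    set π2 : (V × k) →ₗ[k] k := LinearMap.snd k V k with hπ2
    set π1 : (V × k) →ₗ[k] V := LinearMap.fst k V k with hπ1
    set N : Submodule k (MonoidAlgebra k (G ⧸ H)) :=
      LinearMap.ker (π2.comp φ.hom.toLinearMap) with hN
    have hNstab : ∀ (g : G) (x : MonoidAlgebra k (G ⧸ H)),
        x ∈ N → (permRep k G H).ρ g x ∈ N := by
      intro g x hx
      have h1 : φ.hom ((permRep k G H).ρ g x) = E.ρ g (φ.hom x) := Rep.hom_comm_apply φ g x
      have h2 : π2 (E.ρ g (φ.hom x)) = π2 (φ.hom x) := rfl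
      show π2 (φ.hom ((permRep k G H).ρ g x)) = 0
      rw [h1, h2]
      exact hx
    set S : Rep k G := Rep.of (X := N) (StmtFour.subRep (permRep k G H).ρ N hNstab) with hS
    set i : S ⟶ permRep k G H :=
      ConcreteCategory.ofHom (C := Rep k G) ⟨N.subtype, fun g => rfl⟩ with hi
    haveI hmono : Mono i := by
      rw [Rep.mono_iff_injective]
      exact Subtype.val_injective
    set π : S ⟶ V :=
      ConcreteCategory.ofHom (C := Rep k G)
        ⟨π1.comp (φ.hom.toLinearMap.comp N.subtype), fun g => by
          refine LinearMap.ext fun (x : ↥N) => ?_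
          show π1 (φ.hom ((permRep k G H).ρ g (x : MonoidAlgebra k (G ⧸ H)))) =
            V.ρ g (π1 (φ.hom (x : MonoidAlgebra k (G ⧸ H))))
          have h1 : φ.hom ((permRep k G H).ρ g (x : MonoidAlgebra k (G ⧸ H))) =
              E.ρ g (φ.hom (x : MonoidAlgebra k (G ⧸ H))) :=
            Rep.hom_comm_apply φ g _
          have h2 : (φ.hom (x : MonoidAlgebra k (G ⧸ H))).2 = 0 := x.2
          rw [h1]
          show V.ρ g (φ.hom (x : MonoidAlgebra k (G ⧸ H))).1 + (φ.hom (x : MonoidAlgebra k (G ⧸ H))).2 • _ =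
            V.ρ g (φ.hom (x : MonoidAlgebra k (G ⧸ H))).1
          rw [h2, zero_smul, add_zero]⟩ with hπ
    haveI hepi : Epi π := by
      refine epi_of_nonzero_to_simple (fun h0 => hf ?_)
      rw [coboundaries₁, LinearMap.mem_range]
      refine ⟨-vA, funext fun g => ?_⟩
      set dg : MonoidAlgebra k (G ⧸ H) :=
        MonoidAlgebra.single (QuotientGroup.mk g) 1 - MonoidAlgebra.single (QuotientGroup.mk (1 : G)) 1
        with hdg
      have h2 : φ.hom dg = E.ρ g ee - E.ρ (1 : G) ee := by
        rw [hdg]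
        exact (map_sub φ.hom (MonoidAlgebra.single (QuotientGroup.mk g) (1 : k))
          (MonoidAlgebra.single (QuotientGroup.mk (1 : G)) (1 : k))).trans
          (congrArg₂ (· - ·) (StmtFour.ofFixedHom_single E ee he g)
            (StmtFour.ofFixedHom_single E ee he 1))
      have hdgmem : dg ∈ N := by
        show π2 (φ.hom dg) = 0
        rw [h2, map_sub]
        show ((E.ρ g ee).2 : k) - ((E.ρ (1 : G) ee).2 : k) = 0
        rw [show (E.ρ g ee).2 = (1 : k) from rfl, show (E.ρ (1 : G) ee).2 = (1 : k) from rfl,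
          sub_self]
      have h1 : π.hom (⟨dg, hdgmem⟩ : ↥N) = 0 := by rw [h0]; rfl
      have h3 : V.ρ g vA + (1 : k) • (f : G → V) g - vA = 0 := by
        have h4 : π.hom (⟨dg, hdgmem⟩ : ↥N) = V.ρ g vA + (1 : k) • (f : G → V) g - vA := by
          show π1 (φ.hom dg) = _
          rw [h2, map_sub, map_one]
          rfl
        rw [← h4, h1]
      rw [one_smul] at h3
      have h5 : (f : G → V) g = vA - V.ρ g vA := by
        have h4 := sub_eq_zero.mp h3
        rw [eq_sub_iff_add_eq, add_comm]
        exact h4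
      show V.ρ g (-vA) - (-vA) = (f : G → V) g
      rw [map_neg, h5]
      abel
    exact hnotCF ⟨S, i, π, hmono, hepi⟩
  haveI : Subsingleton (H1 V) := subsingleton_of_forall_eq 0 fun x =>
    H1_induction_on x fun a => (H1π_eq_zero_iff a).2 (key a)
  exact ModuleCat.isZero_of_subsingleton (H1 V)
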